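/- Let α be a real number with 0 < α < π. Then the function ξ ↦ F̃(ξ,α) is strictly decreasing on (0,∞): for all real ξ₁, ξ₂ with 0 < ξ₁ < ξ₂, one has F̃(ξ₂,α) < F̃(ξ₁,α). -/

import Mathlib

open Real

/-- The hyperbolic dispersion function of the corner transmission problem. -/
noncomputable def Ftilde (ξ α : ℝ) : ℝ :=
  Real.sinh (α * ξ) * Real.sinh ((2 * Real.pi - α) * ξ) /
    (1 - Real.cosh (α * ξ) * Real.cosh ((2 * Real.pi - α) * ξ))

/-- `sinh x < x * cosh x` for `x > 0`. -/
lemma aux_sinh_lt_mul_cosh {x : ℝ} (hx : 0 < x) : Real.sinh x < x * Real.cosh x := by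
  have hmono : StrictMonoOn (fun y : ℝ => y * Real.cosh y - Real.sinh y) (Set.Ici 0) := by
    apply strictMonoOn_of_deriv_pos (convex_Ici 0)
    · exact ((continuous_id.mul Real.continuous_cosh).sub Real.continuous_sinh).continuousOn
    · intro y hy
      rw [interior_Ici, Set.mem_Ioi] at hy
      have hd : HasDerivAt (fun y : ℝ => y * Real.cosh y - Real.sinh y)
          (1 * Real.cosh y + y * Real.sinh y - Real.cosh y) y :=
        ((hasDerivAt_id y).mul (Real.hasDerivAt_cosh y)).sub (Real.hasDerivAt_sinh y)
      rw [hd.deriv]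
      have : 0 < y * Real.sinh y := mul_pos hy (by rwa [Real.sinh_pos_iff])
      nlinarith
  have := hmono (Set.self_mem_Ici) (Set.mem_Ici.2 hx.le) hx
  simp only [Real.cosh_zero, Real.sinh_zero, mul_one, zero_mul, sub_zero] at this
  linarith

/-- `sinh x / x` is strictly increasing: `v * sinh u < u * sinh v` for `0 < u < v`. -/
lemma aux_sinh_div_mono {u v : ℝ} (hu : 0 < u) (huv : u < v) :
    v * Real.sinh u < u * Real.sinh v := by
  have hmono : StrictMonoOn (fun y : ℝ => u * Real.sinh y - y * Real.sinh u) (Set.Ici u) := by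
    apply strictMonoOn_of_deriv_pos (convex_Ici u)
    · exact ((continuous_const.mul Real.continuous_sinh).sub
        (continuous_id.mul continuous_const)).continuousOn
    · intro y hy
      rw [interior_Ici, Set.mem_Ioi] at hy
      have hd : HasDerivAt (fun y : ℝ => u * Real.sinh y - y * Real.sinh u)
          (Real.cosh y * u - (1 * Real.sinh u + y * 0)) y :=
        (((Real.hasDerivAt_sinh y).const_mul u).congr_deriv (by ring)).sub
          ((hasDerivAt_id y).mul (hasDerivAt_const y _))
      rw [hd.deriv]
      have h1 : Real.sinh u < u * Real.cosh u := aux_sinh_lt_mul_cosh hu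
      have h2 : Real.cosh u < Real.cosh y := by
        rw [Real.cosh_lt_cosh, abs_of_pos hu, abs_of_pos (hu.trans hy)]; exact hy
      nlinarith
  have := hmono (Set.self_mem_Ici) (Set.mem_Ici.2 huv.le) huv
  simp only at this
  nlinarith [this]

/-- `x * coth x` is strictly increasing: for `0 < a < b`,
`a * cosh a * sinh b < b * cosh b * sinh a`. -/
lemma aux_coth_mono {a b : ℝ} (ha : 0 < a) (hab : a < b) :
    a * Real.cosh a * Real.sinh b < b * Real.cosh b * Real.sinh a := by
  have key : (a + b) * Real.sinh (b - a) < (b - a) * Real.sinh (a + b) :=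
    aux_sinh_div_mono (by linarith) (by linarith)
  have e1 : Real.sinh (b - a) = Real.sinh b * Real.cosh a - Real.cosh b * Real.sinh a :=
    Real.sinh_sub b a
  have e2 : Real.sinh (a + b) = Real.sinh a * Real.cosh b + Real.cosh a * Real.sinh b :=
    Real.sinh_add a b
  nlinarith [key, e1, e2]

/-- Key lemma: for `0 < q < p` and `0 < s < t`,
`sinh (p s) * sinh (q t) < sinh (p t) * sinh (q s)`. -/
lemma aux_key {p q s t : ℝ} (hq : 0 < q) (hqp : q < p) (hs : 0 < s) (hst : s < t) :
    Real.sinh (p * s) * Real.sinh (q * t) < Real.sinh (p * t) * Real.sinh (q * s) := by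
  have hp : 0 < p := hq.trans hqp
  have hne : ∀ x ∈ Set.Ioi (0 : ℝ), Real.sinh (q * x) ≠ 0 := fun x hx =>
    Real.sinh_ne_zero.2 (ne_of_gt (mul_pos hq hx))
  have hmono : StrictMonoOn (fun x : ℝ => Real.sinh (p * x) / Real.sinh (q * x))
      (Set.Ioi 0) := by
    apply strictMonoOn_of_deriv_pos (convex_Ioi 0)
    · apply ContinuousOn.div
      · exact (Real.continuous_sinh.comp (continuous_const.mul continuous_id)).continuousOn
      · exact (Real.continuous_sinh.comp (continuous_const.mul continuous_id)).continuousOn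
      · exact hne
    · intro x hx
      rw [interior_Ioi, Set.mem_Ioi] at hx
      have hqx : 0 < q * x := mul_pos hq hx
      have hpx : 0 < p * x := mul_pos hp hx
      have hsq : 0 < Real.sinh (q * x) := Real.sinh_pos_iff.2 hqx
      have hip : HasDerivAt (fun y : ℝ => p * y) p x := by
        simpa using (hasDerivAt_id x).const_mul p
      have hiq : HasDerivAt (fun y : ℝ => q * y) q x := by
        simpa using (hasDerivAt_id x).const_mul q
      have hdp : HasDerivAt (fun x : ℝ => Real.sinh (p * x)) (Real.cosh (p * x) * p) x :=
        hip.sinh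
      have hdq : HasDerivAt (fun x : ℝ => Real.sinh (q * x)) (Real.cosh (q * x) * q) x :=
        hiq.sinh
      have hd : HasDerivAt (fun y : ℝ => Real.sinh (p * y) / Real.sinh (q * y))
          ((Real.cosh (p * x) * p * Real.sinh (q * x) - Real.sinh (p * x) * (Real.cosh (q * x) * q))
            / Real.sinh (q * x) ^ 2) x := hdp.div hdq hsq.ne'
      rw [hd.deriv]
      apply div_pos
      · have hc := aux_coth_mono hqx (by nlinarith : q * x < p * x)
        nlinarith [hc]
      · positivity
  have hlt := hmono (Set.mem_Ioi.2 hs) (Set.mem_Ioi.2 (hs.trans hst)) hst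
  have hs1 : 0 < Real.sinh (q * s) := Real.sinh_pos_iff.2 (mul_pos hq hs)
  have hs2 : 0 < Real.sinh (q * t) := Real.sinh_pos_iff.2 (mul_pos hq (hs.trans hst))
  rw [div_lt_div_iff₀ hs1 hs2] at hlt
  linarith [hlt]

theorem hyperbolic_dispersion_strictAnti
    (α : ℝ) (hα0 : 0 < α) (hαπ : α < Real.pi)
    (ξ₁ ξ₂ : ℝ) (h0 : 0 < ξ₁) (h12 : ξ₁ < ξ₂) :
    Ftilde ξ₂ α < Ftilde ξ₁ α := by
  set q : ℝ := Real.pi - α with hqdef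
  have hq0 : 0 < q := by simp [hqdef]; linarith
  have hqπ : q < Real.pi := by simp [hqdef]; linarith
  -- rewrite Ftilde in terms of sinh(π ξ) and sinh(q ξ)
  have hF : ∀ ξ : ℝ, 0 < ξ → Ftilde ξ α =
      (Real.sinh (q * ξ) ^ 2 - Real.sinh (Real.pi * ξ) ^ 2) /
        (Real.sinh (Real.pi * ξ) ^ 2 + Real.sinh (q * ξ) ^ 2) := by
    intro ξ hξ
    have e1 : α * ξ = Real.pi * ξ - q * ξ := by rw [hqdef]; ring
    have e2 : (2 * Real.pi - α) * ξ = Real.pi * ξ + q * ξ := by rw [hqdef]; ring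
    set s := Real.sinh (Real.pi * ξ)
    set c := Real.cosh (Real.pi * ξ)
    set σ := Real.sinh (q * ξ)
    set γ := Real.cosh (q * ξ)
    have hc : c ^ 2 = s ^ 2 + 1 := Real.cosh_sq (Real.pi * ξ)
    have hγ : γ ^ 2 = σ ^ 2 + 1 := Real.cosh_sq (q * ξ)
    have hN : Real.sinh (α * ξ) * Real.sinh ((2 * Real.pi - α) * ξ) = s ^ 2 - σ ^ 2 := by
      rw [e1, e2, Real.sinh_sub, Real.sinh_add]
      show (s * γ - c * σ) * (s * γ + c * σ) = s ^ 2 - σ ^ 2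
      linear_combination s ^ 2 * hγ - σ ^ 2 * hc
    have hD : 1 - Real.cosh (α * ξ) * Real.cosh ((2 * Real.pi - α) * ξ) =
        -(s ^ 2 + σ ^ 2) := by
      rw [e1, e2, Real.cosh_sub, Real.cosh_add]
      show 1 - (c * γ - s * σ) * (c * γ + s * σ) = -(s ^ 2 + σ ^ 2)
      linear_combination (-γ ^ 2) * hc + (-(s ^ 2) - 1) * hγ
    have hspos : 0 < s := Real.sinh_pos_iff.2 (mul_pos Real.pi_pos hξ)
    have hden : s ^ 2 + σ ^ 2 ≠ 0 := by positivity
    rw [Ftilde, hN, hD, div_neg, ← neg_div]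
    congr 1
    ring
  rw [hF ξ₁ h0, hF ξ₂ (h0.trans h12)]
  have hs1 : 0 < Real.sinh (Real.pi * ξ₁) := Real.sinh_pos_iff.2 (mul_pos Real.pi_pos h0)
  have hs2 : 0 < Real.sinh (Real.pi * ξ₂) :=
    Real.sinh_pos_iff.2 (mul_pos Real.pi_pos (h0.trans h12))
  have hσ1 : 0 < Real.sinh (q * ξ₁) := Real.sinh_pos_iff.2 (mul_pos hq0 h0)
  have hσ2 : 0 < Real.sinh (q * ξ₂) := Real.sinh_pos_iff.2 (mul_pos hq0 (h0.trans h12))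
  have key := aux_key hq0 hqπ h0 h12
  rw [div_lt_div_iff₀ (by positivity) (by positivity)]
  nlinarith [key, mul_pos hs1 hσ2, mul_pos hs2 hσ1, sq_nonneg (Real.sinh (q * ξ₁)),
    sq_nonneg (Real.sinh (Real.pi * ξ₂))]
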